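/- For λ > 0 and l₁, l₂ ∈ ℕ₀, ∫_{-1}^1 C_{l₁}^λ(t) · C_{l₂}^{λ+1}(t) · (1-t²)^{λ+1/2} dt = δ_{l₁ l₂} · π·λ·Γ(l₁+2λ+2) / (2^{2λ+1} · l₁! · (l₁+λ) · (l₁+λ+1) · Γ(λ+1)²) − δ_{l₁-2, l₂} · π·λ·Γ(l₁+2λ) / (2^{2λ+1} · (l₁-2)! · (l₁+λ-1) · (l₁+λ) · Γ(λ+1)²), where the second term is present only if l₁ ≥ 2. -/

import Mathlib

open Real

/-- The Gegenbauer polynomial `C_l^λ(t)`, via its standard explicit formula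
(equivalent to the generating-function definition
`∑ C_l^λ(t) r^l = (1 - 2tr + r²)^(-λ)`). -/
noncomputable def gegenbauer (lam : ℝ) (l : ℕ) (t : ℝ) : ℝ :=
  ∑ k ∈ Finset.range (l / 2 + 1),
    (-1 : ℝ) ^ k * Real.Gamma (lam + l - k) /
      (Real.Gamma lam * (Nat.factorial k) * (Nat.factorial (l - 2 * k))) *
      (2 * t) ^ (l - 2 * k)

namespace Geg

noncomputable def gcoef (lam : ℝ) (l k : ℕ) : ℝ :=
  (-1 : ℝ) ^ k * Real.Gamma (lam + l - k) /
    (Real.Gamma lam * (Nat.factorial k) * (Nat.factorial (l - 2 * k)))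

lemma geg_def (lam : ℝ) (l : ℕ) (t : ℝ) :
    gegenbauer lam l t = ∑ k ∈ Finset.range (l / 2 + 1), gcoef lam l k * (2 * t) ^ (l - 2 * k) :=
  rfl

lemma geg_eq_sum (lam : ℝ) (l : ℕ) (t : ℝ) {N : ℕ} (hN : l / 2 + 1 ≤ N) :
    gegenbauer lam l t =
      ∑ k ∈ Finset.range N, if 2 * k ≤ l then gcoef lam l k * (2 * t) ^ (l - 2 * k) else 0 := by
  rw [geg_def]
  rw [← Finset.sum_subset (Finset.range_subset_range.mpr hN) (fun x _ hx => ?_)]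
  · apply Finset.sum_congr rfl
    intro k hk
    rw [if_pos]
    rw [Finset.mem_range, Nat.lt_succ_iff] at hk
    omega
  · rw [if_neg]
    rw [Finset.mem_range, Nat.lt_succ_iff] at hx
    omega

lemma geg_continuous (lam : ℝ) (l : ℕ) : Continuous (gegenbauer lam l) := by
  unfold gegenbauer
  exact continuous_finset_sum _ fun k _ =>
    continuous_const.mul ((continuous_const.mul continuous_id).pow _)

lemma geg_zero (lam : ℝ) (hlam : 0 < lam) (t : ℝ) : gegenbauer lam 0 t = 1 := by
  have h := (Real.Gamma_pos_of_pos hlam).ne'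
  simp [geg_def, gcoef]
  exact h

lemma Gamma_succ (y : ℝ) (hy : 0 < y) : Real.Gamma (y + 1) = y * Real.Gamma y :=
  Real.Gamma_add_one hy.ne'

lemma geg_hasDerivAt (lam : ℝ) (hlam : 0 < lam) {l : ℕ} (hl : 1 ≤ l) (x : ℝ) :
    HasDerivAt (gegenbauer lam l) (2 * lam * gegenbauer (lam + 1) (l - 1) x) x := by
  have h1 : HasDerivAt (gegenbauer lam l)
      (∑ k ∈ Finset.range (l / 2 + 1),
        gcoef lam l k * ((2:ℝ) ^ (l - 2 * k) * ((l - 2 * k : ℕ) * x ^ (l - 2 * k - 1)))) x := by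
    have : gegenbauer lam l = fun t =>
        ∑ k ∈ Finset.range (l / 2 + 1), gcoef lam l k * ((2:ℝ) ^ (l - 2 * k) * t ^ (l - 2 * k)) := by
      funext t
      rw [geg_def]
      exact Finset.sum_congr rfl fun k _ => by rw [mul_pow]
    rw [this]
    apply HasDerivAt.fun_sum
    intro k _
    exact ((hasDerivAt_pow (l - 2 * k) x).const_mul ((2:ℝ) ^ (l - 2 * k))).const_mul _
  convert h1 using 1
  rw [geg_eq_sum (lam + 1) (l - 1) x (N := l / 2 + 1) (by omega), Finset.mul_sum]
  apply Finset.sum_congr rfl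
  intro k hk
  rw [Finset.mem_range, Nat.lt_succ_iff] at hk
  have h2k : 2 * k ≤ l := by omega
  by_cases h : 2 * k ≤ l - 1
  · rw [if_pos h]
    obtain ⟨m, hm⟩ : ∃ m, l - 2 * k = m + 1 := ⟨l - 2 * k - 1, by omega⟩
    have e1 : l - 1 - 2 * k = m := by omega
    have e2 : l - 2 * k - 1 = m := by omega
    have e3 : lam + 1 + ((l - 1 : ℕ) : ℝ) - k = lam + l - k := by
      rw [Nat.cast_sub hl]; push_cast; ring
    have e4 : ((l - 2 * k).factorial : ℝ) = ((m:ℝ) + 1) * (m.factorial) := by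
      rw [hm, Nat.factorial_succ]; push_cast; ring
    have e5 : ((l - 2 * k : ℕ) : ℝ) = (m : ℝ) + 1 := by rw [hm]; push_cast; ring
    rw [gcoef, gcoef, e1, e2, e3, e4, e5, hm, mul_pow, Gamma_succ lam hlam]
    have hΓ : Real.Gamma lam ≠ 0 := (Real.Gamma_pos_of_pos hlam).ne'
    have hkf : (Nat.factorial k : ℝ) ≠ 0 := Nat.cast_ne_zero.mpr (Nat.factorial_ne_zero k)
    have hmf : (Nat.factorial m : ℝ) ≠ 0 := Nat.cast_ne_zero.mpr (Nat.factorial_ne_zero m)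
    have hm1 : (m : ℝ) + 1 ≠ 0 := by positivity
    rw [pow_succ]
    field_simp
  · rw [if_neg h]
    have : l - 2 * k = 0 := by omega
    rw [this]
    simp


lemma geg_one (lam : ℝ) (hlam : 0 < lam) (x : ℝ) : gegenbauer lam 1 x = 2 * lam * x := by
  have hΓ : Real.Gamma lam ≠ 0 := (Real.Gamma_pos_of_pos hlam).ne'
  simp [geg_def, gcoef, Finset.sum_range_succ]
  rw [Gamma_succ lam hlam]
  field_simp

lemma conn (lam : ℝ) (hlam : 0 < lam) {n : ℕ} (hn : 2 ≤ n) (x : ℝ) :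
    gegenbauer lam n x =
      lam / (n + lam) * (gegenbauer (lam + 1) n x - gegenbauer (lam + 1) (n - 2) x) := by
  have hΓ : Real.Gamma lam ≠ 0 := (Real.Gamma_pos_of_pos hlam).ne'
  have hshift : (∑ k ∈ Finset.range (n / 2 + 1),
      (if k = 0 then (0:ℝ) else gcoef (lam + 1) (n - 2) (k - 1) * (2 * x) ^ (n - 2 * k)))
      = gegenbauer (lam + 1) (n - 2) x := by
    rw [geg_def, show n / 2 + 1 = ((n - 2) / 2 + 1) + 1 from by omega, Finset.sum_range_succ']
    simp only [Nat.add_sub_cancel, if_true, add_zero, Nat.succ_ne_zero, if_false]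
    refine Finset.sum_congr rfl fun i _ => by
      rw [show n - 2 * (i + 1) = n - 2 - 2 * i from by omega]
  rw [geg_def, geg_def (lam + 1) n, ← hshift, ← Finset.sum_sub_distrib, Finset.mul_sum]
  refine Finset.sum_congr rfl fun k hk => ?_
  rw [Finset.mem_range, Nat.lt_succ_iff] at hk
  have h2k : 2 * k ≤ n := by omega
  have hkn : (k : ℝ) ≤ (n : ℝ) := by exact_mod_cast le_trans (by omega : k ≤ n) le_rfl
  have hy : (0:ℝ) < lam + n - k := by linarith
  have hnl : (n : ℝ) + lam ≠ 0 := by positivity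
  rcases Nat.eq_zero_or_pos k with rfl | hk1
  · rw [if_pos rfl, sub_zero]
    have e1 : lam + 1 + (n:ℝ) - (0:ℕ) = (lam + (n:ℝ) - (0:ℕ)) + 1 := by push_cast; ring
    rw [gcoef, gcoef, e1, Real.Gamma_add_one (by push_cast at hy ⊢; linarith)]
    rw [Gamma_succ lam hlam]
    have hfac : ((n - 2*0).factorial : ℝ) ≠ 0 := Nat.cast_ne_zero.mpr (Nat.factorial_ne_zero _)
    push_cast
    field_simp
    ring
  · obtain ⟨k', rfl⟩ : ∃ k', k = k' + 1 := ⟨k - 1, by omega⟩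
    rw [if_neg (Nat.succ_ne_zero k'), Nat.add_sub_cancel]
    have efac : (n - 2) - 2 * k' = n - 2 * (k' + 1) := by omega
    have hc : gcoef lam n (k' + 1) =
        lam / (n + lam) * (gcoef (lam + 1) n (k' + 1) - gcoef (lam + 1) (n - 2) k') := by
      rw [gcoef, gcoef, gcoef, efac]
      have e1 : lam + 1 + (n:ℝ) - ((k' + 1 : ℕ) : ℝ) = (lam + (n:ℝ) - ((k' + 1 : ℕ):ℝ)) + 1 := by
        push_cast; ring
      have e2 : lam + 1 + ((n - 2 : ℕ) : ℝ) - (k' : ℝ) = lam + (n:ℝ) - ((k' + 1 : ℕ):ℝ) := by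
        rw [Nat.cast_sub hn]; push_cast; ring
      rw [e1, e2, Real.Gamma_add_one (by push_cast at hy ⊢; linarith)]
      rw [Gamma_succ lam hlam, Nat.factorial_succ (k')]
      have h1 : ((k'.factorial : ℝ)) ≠ 0 := Nat.cast_ne_zero.mpr (Nat.factorial_ne_zero _)
      have h2 : ((n - 2*(k'+1)).factorial : ℝ) ≠ 0 := Nat.cast_ne_zero.mpr (Nat.factorial_ne_zero _)
      have h3 : ((k':ℝ) + 1) ≠ 0 := by positivity
      push_cast
      field_simp
      ring
    rw [hc]
    ring

noncomputable def gderiv (lam : ℝ) (j : ℕ) (x : ℝ) : ℝ :=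
  if j = 0 then 0 else 2 * lam * gegenbauer (lam + 1) (j - 1) x

lemma geg_hasDerivAt' (lam : ℝ) (hlam : 0 < lam) (j : ℕ) (x : ℝ) :
    HasDerivAt (gegenbauer lam j) (gderiv lam j x) x := by
  rcases Nat.eq_zero_or_pos j with rfl | hj
  · rw [gderiv, if_pos rfl]
    have : gegenbauer lam 0 = fun _ : ℝ => (1:ℝ) := funext fun t => geg_zero lam hlam t
    rw [this]
    exact hasDerivAt_const x 1
  · rw [gderiv, if_neg (by omega)]
    exact geg_hasDerivAt lam hlam hj x

lemma gcoef_eval (lam : ℝ) (l k m : ℕ) (h : l - 2 * k = m) (y : ℝ) (hy : lam + l - k = y) :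
    gcoef lam l k = (-1:ℝ) ^ k * Real.Gamma y /
      (Real.Gamma lam * (Nat.factorial k) * (Nat.factorial m)) := by
  rw [gcoef, h, hy]

lemma fact_cast1 (m : ℕ) : (((m+1).factorial : ℕ) : ℝ) = ((m:ℝ)+1) * ((m.factorial : ℕ) : ℝ) := by
  rw [Nat.factorial_succ]; push_cast; ring

lemma fact_cast2 (m : ℕ) :
    (((m+2).factorial : ℕ) : ℝ) = ((m:ℝ)+2) * (((m:ℝ)+1) * ((m.factorial : ℕ) : ℝ)) := by
  rw [show m+2 = (m+1)+1 from rfl, Nat.factorial_succ, Nat.factorial_succ]; push_cast; ring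

set_option maxHeartbeats 2000000 in
lemma keyB (lam : ℝ) (hlam : 1 < lam) (j : ℕ) (x : ℝ) :
    (1 - x ^ 2) * gderiv lam j x - (2 * lam - 1) * x * gegenbauer lam j x
      = -(((j:ℝ) + 1) * ((j:ℝ) + 2 * lam - 1) / (2 * (lam - 1))) *
          gegenbauer (lam - 1) (j + 1) x := by
  have hlam0 : 0 < lam := lt_trans one_pos hlam
  have hl1 : lam - 1 ≠ 0 := ne_of_gt (by linarith)
  have hΓ1 : Real.Gamma (lam - 1) ≠ 0 := (Real.Gamma_pos_of_pos (by linarith)).ne'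
  have hGlam : Real.Gamma lam = (lam - 1) * Real.Gamma (lam - 1) := by
    rw [← Gamma_succ (lam - 1) (by linarith), sub_add_cancel]
  have hGlam1 : Real.Gamma (lam + 1) = lam * ((lam - 1) * Real.Gamma (lam - 1)) := by
    rw [Gamma_succ lam hlam0, hGlam]
  rcases Nat.eq_zero_or_pos j with rfl | hj
  · rw [gderiv, if_pos rfl, geg_zero lam hlam0, geg_one (lam - 1) (by linarith) x]
    push_cast
    field_simp
    ring
  -- j ≥ 1
  set N := (j + 1) / 2 + 1 with hN
  set g1 : ℕ → ℝ := fun k =>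
    if 2 * k ≤ j - 1 then gcoef (lam + 1) (j - 1) k * (2 * x) ^ (j - 1 - 2 * k) else 0 with hg1
  set g2 : ℕ → ℝ := fun k =>
    if 2 * k ≤ j then gcoef lam j k * (2 * x) ^ (j - 2 * k) else 0 with hg2
  set g3 : ℕ → ℝ := fun k => gcoef (lam - 1) (j + 1) k * (2 * x) ^ (j + 1 - 2 * k) with hg3
  set sh : ℕ → ℝ := fun k => if k = 0 then 0 else g1 (k - 1) with hsh
  have h1 : gegenbauer (lam + 1) (j - 1) x = ∑ k ∈ Finset.range N, g1 k :=
    geg_eq_sum (lam + 1) (j - 1) x (by omega)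
  have h2 : gegenbauer lam j x = ∑ k ∈ Finset.range N, g2 k :=
    geg_eq_sum lam j x (by omega)
  have h3 : gegenbauer (lam - 1) (j + 1) x = ∑ k ∈ Finset.range N, g3 k := geg_def _ _ _
  have hshift : ∑ k ∈ Finset.range N, sh k = ∑ k ∈ Finset.range N, g1 k := by
    rw [hN, Finset.sum_range_succ', Finset.sum_range_succ]
    have htop : g1 ((j + 1) / 2) = 0 := by
      rw [hg1]; exact if_neg (by omega)
    rw [htop, add_zero]
    simp only [hsh, Nat.succ_ne_zero, if_false, Nat.add_sub_cancel, if_pos rfl, add_zero]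
  have hfΓ : ∀ m : ℕ, ((Nat.factorial m : ℕ) : ℝ) ≠ 0 :=
    fun m => Nat.cast_ne_zero.mpr (Nat.factorial_ne_zero _)
  have main : ∀ k ∈ Finset.range N,
      (2 * lam) * sh k - (2 * lam * x ^ 2) * g1 k - ((2 * lam - 1) * x) * g2 k
        = (-(((j:ℝ) + 1) * ((j:ℝ) + 2 * lam - 1) / (2 * (lam - 1)))) * g3 k := by
    intro k hk
    rw [Finset.mem_range, hN, Nat.lt_succ_iff] at hk
    have h2k : 2 * k ≤ j + 1 := by omega
    rcases Nat.eq_zero_or_pos k with rfl | hk1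
    · -- k = 0
      obtain ⟨m, hm⟩ : ∃ m, j = m + 1 := ⟨j - 1, by omega⟩
      have hjR : (j : ℝ) = (m : ℝ) + 1 := by rw [hm]; push_cast; ring
      have esh : sh 0 = 0 := by simp [hsh]
      have e1 : g1 0 = gcoef (lam + 1) (j - 1) 0 * (2 * x) ^ m := by
        rw [hg1]
        simp only []
        rw [if_pos (by omega), show j - 1 - 2 * 0 = m from by omega]
      have e2 : g2 0 = gcoef lam j 0 * (2 * x) ^ (m + 1) := by
        rw [hg2]
        simp only []
        rw [if_pos (by omega), show j - 2 * 0 = m + 1 from by omega]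
      have e3 : g3 0 = gcoef (lam - 1) (j + 1) 0 * (2 * x) ^ (m + 2) := by
        rw [hg3]
        simp only []
        rw [show j + 1 - 2 * 0 = m + 2 from by omega]
      rw [esh, e1, e2, e3,
        gcoef_eval (lam + 1) (j - 1) 0 m (by omega) (lam + m + 1)
          (by rw [Nat.cast_sub hj]; push_cast; rw [hjR]; ring),
        gcoef_eval lam j 0 (m + 1) (by omega) (lam + m + 1) (by push_cast; rw [hjR]; ring),
        gcoef_eval (lam - 1) (j + 1) 0 (m + 2) (by omega) (lam + m + 1)
          (by push_cast; rw [hjR]; ring)]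
      rw [fact_cast1 m, fact_cast2 m, hGlam, hGlam1, hjR]
      field_simp
      ring
    · obtain ⟨k', rfl⟩ : ∃ k', k = k' + 1 := ⟨k - 1, by omega⟩
      have hsh' : sh (k' + 1) = g1 k' := by
        rw [hsh]; simp only [Nat.succ_ne_zero, if_false, Nat.add_sub_cancel]
      have hck : (0:ℝ) ≤ (k' : ℝ) := Nat.cast_nonneg k'
      by_cases hc1 : 2 * (k' + 1) ≤ j - 1
      · -- generic case
        obtain ⟨m, hm⟩ : ∃ m, j = 2 * k' + m + 3 := ⟨j - 2 * k' - 3, by omega⟩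
        have hjR : (j : ℝ) = 2 * (k' : ℝ) + (m : ℝ) + 3 := by rw [hm]; push_cast; ring
        have hcm : (0:ℝ) ≤ (m : ℝ) := Nat.cast_nonneg m
        have hy0 : lam + (k':ℝ) + (m:ℝ) + 2 ≠ 0 := by nlinarith
        have hyΓ : Real.Gamma ((lam + (k':ℝ) + (m:ℝ) + 2) + 1)
            = (lam + (k':ℝ) + (m:ℝ) + 2) * Real.Gamma (lam + (k':ℝ) + (m:ℝ) + 2) :=
          Real.Gamma_add_one hy0
        have e0 : g1 k' = gcoef (lam + 1) (j - 1) k' * (2 * x) ^ (m + 2) := by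
          rw [hg1]; simp only []
          rw [if_pos (by omega), show j - 1 - 2 * k' = m + 2 from by omega]
        have e1 : g1 (k' + 1) = gcoef (lam + 1) (j - 1) (k' + 1) * (2 * x) ^ m := by
          rw [hg1]; simp only []
          rw [if_pos (by omega), show j - 1 - 2 * (k' + 1) = m from by omega]
        have e2 : g2 (k' + 1) = gcoef lam j (k' + 1) * (2 * x) ^ (m + 1) := by
          rw [hg2]; simp only []
          rw [if_pos (by omega), show j - 2 * (k' + 1) = m + 1 from by omega]
        have e3 : g3 (k' + 1) = gcoef (lam - 1) (j + 1) (k' + 1) * (2 * x) ^ (m + 2) := by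
          rw [hg3]; simp only []
          rw [show j + 1 - 2 * (k' + 1) = m + 2 from by omega]
        rw [hsh', e0, e1, e2, e3,
          gcoef_eval (lam + 1) (j - 1) k' (m + 2) (by omega) ((lam + (k':ℝ) + (m:ℝ) + 2) + 1)
            (by rw [Nat.cast_sub hj]; push_cast; rw [hjR]; ring),
          gcoef_eval (lam + 1) (j - 1) (k' + 1) m (by omega) (lam + (k':ℝ) + (m:ℝ) + 2)
            (by rw [Nat.cast_sub hj]; push_cast; rw [hjR]; ring),
          gcoef_eval lam j (k' + 1) (m + 1) (by omega) (lam + (k':ℝ) + (m:ℝ) + 2)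
            (by push_cast; rw [hjR]; ring),
          gcoef_eval (lam - 1) (j + 1) (k' + 1) (m + 2) (by omega) (lam + (k':ℝ) + (m:ℝ) + 2)
            (by push_cast; rw [hjR]; ring)]
        rw [hyΓ, fact_cast1 m, fact_cast2 m, Nat.factorial_succ k', hjR, hGlam, hGlam1]
        push_cast
        field_simp
        ring
      · by_cases hc2 : 2 * (k' + 1) ≤ j
        · -- 2k = j
          have hjm : j = 2 * (k' + 1) := by omega
          have hjR : (j : ℝ) = 2 * ((k' : ℝ) + 1) := by rw [hjm]; push_cast; ring
          have hy0 : lam + (k':ℝ) + 1 ≠ 0 := by nlinarith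
          have hyΓ : Real.Gamma ((lam + (k':ℝ) + 1) + 1)
              = (lam + (k':ℝ) + 1) * Real.Gamma (lam + (k':ℝ) + 1) := Real.Gamma_add_one hy0
          have e0 : g1 k' = gcoef (lam + 1) (j - 1) k' * (2 * x) ^ 1 := by
            rw [hg1]; simp only []
            rw [if_pos (by omega), show j - 1 - 2 * k' = 1 from by omega]
          have e1 : g1 (k' + 1) = 0 := by rw [hg1]; simp only []; exact if_neg hc1
          have e2 : g2 (k' + 1) = gcoef lam j (k' + 1) * (2 * x) ^ 0 := by
            rw [hg2]; simp only []
            rw [if_pos (by omega), show j - 2 * (k' + 1) = 0 from by omega]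
          have e3 : g3 (k' + 1) = gcoef (lam - 1) (j + 1) (k' + 1) * (2 * x) ^ 1 := by
            rw [hg3]; simp only []
            rw [show j + 1 - 2 * (k' + 1) = 1 from by omega]
          rw [hsh', e0, e1, e2, e3,
            gcoef_eval (lam + 1) (j - 1) k' 1 (by omega) ((lam + (k':ℝ) + 1) + 1)
              (by rw [Nat.cast_sub hj]; push_cast; rw [hjR]; ring),
            gcoef_eval lam j (k' + 1) 0 (by omega) (lam + (k':ℝ) + 1)
              (by push_cast; rw [hjR]; ring),
            gcoef_eval (lam - 1) (j + 1) (k' + 1) 1 (by omega) (lam + (k':ℝ) + 1)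
              (by push_cast; rw [hjR]; ring)]
          rw [hyΓ, Nat.factorial_succ k', hjR, hGlam, hGlam1]
          push_cast
          field_simp
          ring
        · -- 2k = j + 1
          have hjm : j = 2 * k' + 1 := by omega
          have hjR : (j : ℝ) = 2 * (k' : ℝ) + 1 := by rw [hjm]; push_cast; ring
          have hy0 : lam + (k':ℝ) ≠ 0 := by nlinarith
          have hyΓ : Real.Gamma ((lam + (k':ℝ)) + 1)
              = (lam + (k':ℝ)) * Real.Gamma (lam + (k':ℝ)) := Real.Gamma_add_one hy0
          have e0 : g1 k' = gcoef (lam + 1) (j - 1) k' * (2 * x) ^ 0 := by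
            rw [hg1]; simp only []
            rw [if_pos (by omega), show j - 1 - 2 * k' = 0 from by omega]
          have e1 : g1 (k' + 1) = 0 := by rw [hg1]; simp only []; exact if_neg hc1
          have e2 : g2 (k' + 1) = 0 := by rw [hg2]; simp only []; exact if_neg hc2
          have e3 : g3 (k' + 1) = gcoef (lam - 1) (j + 1) (k' + 1) * (2 * x) ^ 0 := by
            rw [hg3]; simp only []
            rw [show j + 1 - 2 * (k' + 1) = 0 from by omega]
          rw [hsh', e0, e1, e2, e3,
            gcoef_eval (lam + 1) (j - 1) k' 0 (by omega) ((lam + (k':ℝ)) + 1)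
              (by rw [Nat.cast_sub hj]; push_cast; rw [hjR]; ring),
            gcoef_eval (lam - 1) (j + 1) (k' + 1) 0 (by omega) (lam + (k':ℝ))
              (by push_cast; rw [hjR]; ring)]
          rw [hyΓ, Nat.factorial_succ k', hjR, hGlam1]
          push_cast
          field_simp
          ring
  have hmain := Finset.sum_congr rfl main
  rw [gderiv, if_neg (by omega)]
  rw [h1, h2, h3]
  calc (1 - x ^ 2) * (2 * lam * ∑ k ∈ Finset.range N, g1 k)
        - (2 * lam - 1) * x * ∑ k ∈ Finset.range N, g2 k
      = (2 * lam) * (∑ k ∈ Finset.range N, sh k)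
          - (2 * lam * x ^ 2) * (∑ k ∈ Finset.range N, g1 k)
          - ((2 * lam - 1) * x) * (∑ k ∈ Finset.range N, g2 k) := by
        rw [hshift]; ring
    _ = ∑ k ∈ Finset.range N,
          ((2 * lam) * sh k - (2 * lam * x ^ 2) * g1 k - ((2 * lam - 1) * x) * g2 k) := by
        rw [Finset.sum_sub_distrib, Finset.sum_sub_distrib, ← Finset.mul_sum, ← Finset.mul_sum,
          ← Finset.mul_sum]
    _ = ∑ k ∈ Finset.range N,
          (-(((j:ℝ) + 1) * ((j:ℝ) + 2 * lam - 1) / (2 * (lam - 1)))) * g3 k := hmain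
    _ = -(((j:ℝ) + 1) * ((j:ℝ) + 2 * lam - 1) / (2 * (lam - 1))) *
          ∑ k ∈ Finset.range N, g3 k := (Finset.mul_sum _ _ _).symm

lemma weight_continuous (e : ℝ) (he : 0 ≤ e) : Continuous (fun t : ℝ => (1 - t^2) ^ (e : ℝ)) :=
  (Real.continuous_rpow_const he).comp (continuous_const.sub (continuous_pow 2))

lemma F_hasDerivAt (lam : ℝ) (hlam : 1 < lam) (j : ℕ) {x : ℝ} (hx : x ∈ Set.Ioo (-1:ℝ) 1) :
    HasDerivAt (fun t => (1 - t^2) ^ (lam - 1/2 : ℝ) * gegenbauer lam j t)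
      (-(((j:ℝ)+1) * ((j:ℝ)+2*lam-1) / (2*(lam-1))) *
        ((1 - x^2) ^ (lam - 3/2 : ℝ) * gegenbauer (lam-1) (j+1) x)) x := by
  have hlam0 : 0 < lam := lt_trans one_pos hlam
  obtain ⟨hx1, hx2⟩ := hx
  have hpos : 0 < 1 - x^2 := by nlinarith
  have hq : HasDerivAt (fun t : ℝ => 1 - t^2) (-(2*x)) x := by
    have := (hasDerivAt_pow 2 x).const_sub 1
    simpa using this
  have h2 : HasDerivAt (fun t : ℝ => (1 - t^2) ^ (lam - 1/2 : ℝ))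
      (-(2*x) * (lam - 1/2) * (1 - x^2) ^ (lam - 1/2 - 1 : ℝ)) x :=
    hq.rpow_const (Or.inl hpos.ne')
  have h3 := h2.fun_mul (geg_hasDerivAt' lam hlam0 j x)
  have e2 : (1 - x^2 : ℝ) ^ (lam - 1/2 - 1 : ℝ) = (1 - x^2) ^ (lam - 3/2 : ℝ) := by
    rw [show (lam - 1/2 - 1 : ℝ) = lam - 3/2 by ring]
  have e1 : (1 - x^2 : ℝ) ^ (lam - 1/2 : ℝ) = (1 - x^2) ^ (lam - 3/2 : ℝ) * (1 - x^2) := by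
    rw [show (lam - 1/2 : ℝ) = (lam - 3/2) + 1 by ring, Real.rpow_add hpos, Real.rpow_one]
  have key := keyB lam hlam j x
  refine h3.congr_deriv (Eq.symm ?_)
  rw [e2, e1]
  linear_combination (-((1 - x^2 : ℝ) ^ (lam - 3/2 : ℝ))) * key

lemma parts_step (lam : ℝ) (hlam : 3/2 < lam) (j : ℕ) (u u' : ℝ → ℝ)
    (hu : ∀ x, HasDerivAt u (u' x) x) (hcu : Continuous u) (hcu' : Continuous u') :
    ∫ t in (-1:ℝ)..1, u' t * ((1 - t^2) ^ (lam - 1/2 : ℝ) * gegenbauer lam j t)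
      = (((j:ℝ)+1) * ((j:ℝ)+2*lam-1) / (2*(lam-1))) *
        ∫ t in (-1:ℝ)..1, u t * ((1 - t^2) ^ (lam - 3/2 : ℝ) * gegenbauer (lam-1) (j+1) t) := by
  have hlam1 : 1 < lam := by linarith
  have hlam0 : 0 < lam := by linarith
  set c : ℝ := -(((j:ℝ)+1) * ((j:ℝ)+2*lam-1) / (2*(lam-1))) with hc
  set W : ℝ → ℝ := fun t => (1 - t^2) ^ (lam - 1/2 : ℝ) * gegenbauer lam j t with hW
  set V : ℝ → ℝ := fun t => (1 - t^2) ^ (lam - 3/2 : ℝ) * gegenbauer (lam-1) (j+1) t with hV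
  have hWc : Continuous W := (weight_continuous _ (by linarith)).mul (geg_continuous _ _)
  have hVc : Continuous V := (weight_continuous _ (by linarith)).mul (geg_continuous _ _)
  have hF : ∀ x ∈ Set.Ioo (-1:ℝ) 1,
      HasDerivWithinAt (fun t => u t * W t) (u' x * W x + u x * (c * V x)) (Set.Ioi x) x := by
    intro x hx
    exact (((hu x).mul (F_hasDerivAt lam hlam1 j hx))).hasDerivWithinAt
  have hG : Continuous (fun x => u' x * W x + u x * (c * V x)) :=
    (hcu'.mul hWc).add (hcu.mul (continuous_const.mul hVc))
  have hFTC := intervalIntegral.integral_eq_sub_of_hasDeriv_right_of_le (by norm_num : (-1:ℝ) ≤ 1)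
    ((hcu.mul hWc).continuousOn) hF (hG.intervalIntegrable _ _)
  have hW1 : W 1 = 0 := by
    rw [hW]
    simp only []
    rw [show (1:ℝ) - 1^2 = 0 by norm_num, Real.zero_rpow (by norm_num; linarith), zero_mul]
  have hWm1 : W (-1) = 0 := by
    rw [hW]
    simp only []
    rw [show (1:ℝ) - (-1:ℝ)^2 = 0 by norm_num, Real.zero_rpow (by norm_num; linarith), zero_mul]
  rw [Pi.mul_apply, Pi.mul_apply, hW1, hWm1, mul_zero, mul_zero, sub_zero] at hFTC
  have hsplit : (∫ x in (-1:ℝ)..1, (u' x * W x + u x * (c * V x)))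
      = (∫ x in (-1:ℝ)..1, u' x * W x) + ∫ x in (-1:ℝ)..1, u x * (c * V x) :=
    intervalIntegral.integral_add ((hcu'.mul hWc).intervalIntegrable _ _)
      ((hcu.mul (continuous_const.mul hVc)).intervalIntegrable _ _)
  rw [hsplit] at hFTC
  have h2 : (∫ x in (-1:ℝ)..1, u x * (c * V x)) = c * ∫ x in (-1:ℝ)..1, u x * V x := by
    rw [← intervalIntegral.integral_const_mul]
    congr 1
    funext x
    ring
  rw [h2] at hFTC
  have : (∫ x in (-1:ℝ)..1, u' x * W x) = -c * ∫ x in (-1:ℝ)..1, u x * V x := by linarith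
  rw [this, hc]
  ring

lemma real_beta (b : ℝ) (hb : 0 < b) :
    ∫ x in (0:ℝ)..1, x ^ (b:ℝ) * (1-x) ^ (b:ℝ)
      = Real.Gamma (b+1) ^ 2 / Real.Gamma (2*b+2) := by
  have hre : 0 < Complex.re ((b:ℂ)+1) := by simp; linarith
  have h := Complex.Gamma_mul_Gamma_eq_betaIntegral hre hre
  have hbeta : Complex.betaIntegral ((b:ℂ)+1) ((b:ℂ)+1)
      = ((∫ x in (0:ℝ)..1, x ^ (b:ℝ) * (1-x) ^ (b:ℝ) : ℝ) : ℂ) := by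
    rw [Complex.betaIntegral]
    have hcg : (∫ (x:ℝ) in (0:ℝ)..1, (x:ℂ) ^ ((b:ℂ)+1-1) * (1-(x:ℂ)) ^ ((b:ℂ)+1-1))
        = ∫ (x:ℝ) in (0:ℝ)..1, ((x ^ (b:ℝ) * (1-x) ^ (b:ℝ) : ℝ) : ℂ) := by
      refine intervalIntegral.integral_congr ?_
      intro x hx
      rw [Set.uIcc_of_le (by norm_num : (0:ℝ) ≤ 1)] at hx
      obtain ⟨h0, h1⟩ := hx
      show (x:ℂ) ^ ((b:ℂ)+1-1) * (1-(x:ℂ)) ^ ((b:ℂ)+1-1) = ((x ^ (b:ℝ) * (1-x) ^ (b:ℝ) : ℝ) : ℂ)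
      rw [show ((b:ℂ)+1-1) = ((b:ℝ):ℂ) by ring]
      rw [Complex.ofReal_mul, Complex.ofReal_cpow h0 b, Complex.ofReal_cpow (by linarith) b]
      push_cast
      ring
    rw [hcg]
    exact RCLike.intervalIntegral_ofReal
  rw [hbeta] at h
  have hG1 : Complex.Gamma ((b:ℂ)+1) = ((Real.Gamma (b+1) : ℝ) : ℂ) := by
    rw [show ((b:ℂ)+1) = ((b+1:ℝ):ℂ) by push_cast; ring, Complex.Gamma_ofReal]
  have hG2 : Complex.Gamma ((b:ℂ)+1+((b:ℂ)+1)) = ((Real.Gamma (2*b+2) : ℝ) : ℂ) := by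
    rw [show ((b:ℂ)+1+((b:ℂ)+1)) = ((2*b+2:ℝ):ℂ) by push_cast; ring, Complex.Gamma_ofReal]
  rw [hG1, hG2, ← Complex.ofReal_mul, ← Complex.ofReal_mul, Complex.ofReal_inj] at h
  have hΓ2 : Real.Gamma (2*b+2) ≠ 0 := (Real.Gamma_pos_of_pos (by linarith)).ne'
  field_simp
  rw [show (b + 1) * 2 = 2 * b + 2 by ring]
  rw [sq]
  linarith [h]

lemma integral_weight (b : ℝ) (hb : 0 < b) :
    ∫ t in (-1:ℝ)..1, (1 - t^2) ^ (b:ℝ)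
      = Real.sqrt Real.pi * Real.Gamma (b+1) / Real.Gamma (b+3/2) := by
  have hsub := intervalIntegral.smul_integral_comp_mul_add
    (a := (0:ℝ)) (b := (1:ℝ)) (fun t => (1 - t^2) ^ (b:ℝ)) 2 (-1)
  norm_num at hsub
  -- hsub : 2 • ∫ x in 0..1, (1 - (2*x + -1)^2)^b = ∫ t in -1..1, (1-t^2)^b
  have hcongr : (∫ x in (0:ℝ)..1, (1 - (2*x + -1)^2) ^ (b:ℝ))
      = ∫ x in (0:ℝ)..1, (4:ℝ)^(b:ℝ) * (x ^ (b:ℝ) * (1-x) ^ (b:ℝ)) := by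
    refine intervalIntegral.integral_congr ?_
    intro x hx
    rw [Set.uIcc_of_le (by norm_num : (0:ℝ) ≤ 1)] at hx
    obtain ⟨h0, h1⟩ := hx
    show (1 - (2*x + -1)^2 : ℝ) ^ (b:ℝ) = (4:ℝ)^(b:ℝ) * (x ^ (b:ℝ) * (1-x) ^ (b:ℝ))
    rw [show (1 - (2*x + -1)^2 : ℝ) = 4 * (x * (1-x)) by ring,
      Real.mul_rpow (by norm_num) (mul_nonneg h0 (by linarith)),
      Real.mul_rpow h0 (by linarith)]
  rw [hcongr, intervalIntegral.integral_const_mul, real_beta b hb] at hsub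
  rw [← hsub]
  have hdup := Real.Gamma_mul_Gamma_add_half (b+1)
  rw [show (b+1+1/2 : ℝ) = b + 3/2 by ring, show (2*(b+1) : ℝ) = 2*b+2 by ring] at hdup
  have hA : (0:ℝ) < (2:ℝ) ^ (b:ℝ) := Real.rpow_pos_of_pos two_pos b
  have h4 : (4:ℝ)^(b:ℝ) = (2:ℝ)^(b:ℝ) * (2:ℝ)^(b:ℝ) := by
    rw [show (4:ℝ) = 2*2 by norm_num, Real.mul_rpow (by norm_num) (by norm_num)]
  have h2e : (2:ℝ)^(1-(2*b+2) : ℝ) = ((2:ℝ)^(b:ℝ) * (2:ℝ)^(b:ℝ) * 2)⁻¹ := by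
    rw [show (1-(2*b+2) : ℝ) = -(b+(b+1)) by ring, Real.rpow_neg (by norm_num),
      Real.rpow_add two_pos b (b+1), Real.rpow_add two_pos b 1, Real.rpow_one]
    ring
  rw [h2e] at hdup
  have hΓ1 : (0:ℝ) < Real.Gamma (b+1) := Real.Gamma_pos_of_pos (by linarith)
  have hΓ2 : (0:ℝ) < Real.Gamma (2*b+2) := Real.Gamma_pos_of_pos (by linarith)
  have hΓ3 : (0:ℝ) < Real.Gamma (b+3/2) := Real.Gamma_pos_of_pos (by linarith)
  have hdup2 : Real.Gamma (b+1) * Real.Gamma (b+3/2) * ((2:ℝ)^(b:ℝ)*(2:ℝ)^(b:ℝ)*2)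
      = Real.Gamma (2*b+2) * Real.sqrt Real.pi := by
    rw [hdup]
    field_simp
  rw [h4]
  set S := Real.sqrt Real.pi with hS
  set G1 := Real.Gamma (b+1) with hG1d
  set G3 := Real.Gamma (b+3/2) with hG3d
  set G2 := Real.Gamma (2*b+2) with hG2d
  set A := (2:ℝ)^(b:ℝ) with hAd
  field_simp
  linear_combination hdup2

lemma prod_gamma (y : ℝ) (hy : 0 < y) (n : ℕ) :
    ∏ k ∈ Finset.range n, (y + k) = Real.Gamma (y + n) / Real.Gamma y := by
  induction n with
  | zero => simp [div_self (Real.Gamma_pos_of_pos hy).ne']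
  | succ n ih =>
    rw [Finset.prod_range_succ, ih]
    have hyn : (0:ℝ) < y + n := by
      have := Nat.cast_nonneg (α := ℝ) n
      linarith
    have : Real.Gamma (y + ((n+1:ℕ):ℝ)) = (y + n) * Real.Gamma (y + n) := by
      rw [show (y + ((n+1:ℕ):ℝ)) = (y + n) + 1 by push_cast; ring,
        Real.Gamma_add_one hyn.ne']
    rw [this]
    ring

lemma prod_desc (n : ℕ) : ∏ k ∈ Finset.range n, ((n:ℝ) - k) = (n.factorial : ℝ) := by
  have hrefl := Finset.prod_range_reflect (fun k => (1:ℝ) + k) n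
  have h1 : ∏ j ∈ Finset.range n, ((1:ℝ) + ((n - 1 - j : ℕ):ℝ)) = ∏ k ∈ Finset.range n, ((n:ℝ) - k) := by
    refine Finset.prod_congr rfl fun j hj => ?_
    rw [Finset.mem_range] at hj
    rw [Nat.cast_sub (by omega), Nat.cast_sub (by omega)]
    push_cast
    ring
  have h2 : ∏ k ∈ Finset.range n, ((1:ℝ) + k) = (n.factorial : ℝ) := by
    rw [prod_gamma 1 one_pos n, Real.Gamma_one, div_one, add_comm,
      Real.Gamma_nat_eq_factorial]
  rw [← h1, ← h2]
  exact hrefl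

noncomputable def pfun (mu : ℝ) (m k : ℕ) : ℝ → ℝ := fun x =>
  if k ≤ m then (2:ℝ)^k * (Real.Gamma (mu + k) / Real.Gamma mu) * gegenbauer (mu + k) (m - k) x
  else 0

lemma pfun_continuous (mu : ℝ) (m k : ℕ) : Continuous (pfun mu m k) := by
  by_cases h : k ≤ m
  · have hh : pfun mu m k = fun x =>
        (2:ℝ)^k * (Real.Gamma (mu + k) / Real.Gamma mu) * gegenbauer (mu + k) (m - k) x := by
      funext x; exact if_pos h
    rw [hh]
    exact continuous_const.mul (geg_continuous _ _)
  · have hh : pfun mu m k = fun _ => (0:ℝ) := by funext x; exact if_neg h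
    rw [hh]
    exact continuous_const

lemma pfun_zero (mu : ℝ) (hmu : 0 < mu) (m : ℕ) : pfun mu m 0 = gegenbauer mu m := by
  funext x
  have hΓ : Real.Gamma mu ≠ 0 := (Real.Gamma_pos_of_pos hmu).ne'
  simp [pfun, div_self hΓ]

lemma pfun_hasDerivAt (mu : ℝ) (hmu : 0 < mu) (m k : ℕ) (x : ℝ) :
    HasDerivAt (pfun mu m k) (pfun mu m (k+1) x) x := by
  have hmuk : (0:ℝ) < mu + k := by have := Nat.cast_nonneg (α := ℝ) k; linarith
  by_cases h1 : k + 1 ≤ m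
  · have hk : k ≤ m := by omega
    have hml : 1 ≤ m - k := by omega
    have hg := (geg_hasDerivAt (mu + k) hmuk hml x).const_mul
      ((2:ℝ)^k * (Real.Gamma (mu + k) / Real.Gamma mu))
    have hfun : pfun mu m k = fun t =>
        ((2:ℝ)^k * (Real.Gamma (mu + k) / Real.Gamma mu)) * gegenbauer (mu + k) (m - k) t := by
      funext t; simp [pfun, hk]
    rw [hfun]
    refine hg.congr_deriv (Eq.symm ?_)
    rw [pfun]
    simp only [if_pos h1]
    rw [show mu + ((k+1:ℕ):ℝ) = (mu + k) + 1 from by push_cast; ring,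
      Real.Gamma_add_one hmuk.ne', show m - (k+1) = m - k - 1 from by omega, pow_succ]
    ring
  · by_cases h0 : k ≤ m
    · have hm : k = m := by omega
      subst hm
      have hfun : pfun mu k k = fun _ : ℝ =>
          ((2:ℝ)^k * (Real.Gamma (mu + k) / Real.Gamma mu)) := by
        funext t
        simp only [pfun, le_refl, if_true, Nat.sub_self]
        rw [geg_zero _ (by linarith), mul_one]
      have h2 : pfun mu k (k+1) x = 0 := by simp [pfun, h1]
      rw [hfun, h2]
      exact hasDerivAt_const x _
    · have hfun : pfun mu m k = fun _ : ℝ => (0:ℝ) := by funext t; simp [pfun, h0]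
      have h2 : pfun mu m (k+1) x = 0 := by simp [pfun, show ¬ (k+1 ≤ m) from by omega]
      rw [hfun, h2]
      exact hasDerivAt_const x _

lemma chain_step (mu : ℝ) (hmu : 1 < mu) (n m k : ℕ) (hk : k < n) :
    (∫ t in (-1:ℝ)..1, pfun mu m (k+1) t *
        ((1 - t^2) ^ ((mu + ((k+1:ℕ):ℝ)) - 1/2 : ℝ) * gegenbauer (mu + ((k+1:ℕ):ℝ)) (n - (k+1)) t))
      = (((n:ℝ) - k) * ((n:ℝ) + k + 2*mu) / (2*(mu + k))) *
        ∫ t in (-1:ℝ)..1, pfun mu m k t *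
          ((1 - t^2) ^ ((mu + (k:ℝ)) - 1/2 : ℝ) * gegenbauer (mu + (k:ℝ)) (n - k) t) := by
  have hck : (0:ℝ) ≤ (k:ℝ) := Nat.cast_nonneg k
  have hlam : (3:ℝ)/2 < mu + (k:ℝ) + 1 := by linarith
  have hps := parts_step (mu + (k:ℝ) + 1) hlam (n - (k+1)) (pfun mu m k) (pfun mu m (k+1))
      (pfun_hasDerivAt mu (by linarith) m k) (pfun_continuous mu m k) (pfun_continuous mu m (k+1))
  rw [show (n - (k+1)) + 1 = n - k from by omega,
    show (mu + (k:ℝ) + 1 - 1 : ℝ) = mu + (k:ℝ) from by ring,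
    show (mu + (k:ℝ) + 1 - 3/2 : ℝ) = mu + (k:ℝ) - 1/2 from by ring,
    show ((n - (k+1) : ℕ) : ℝ) = (n:ℝ) - (k:ℝ) - 1 from by
      rw [Nat.cast_sub (by omega)]; push_cast; ring] at hps
  rw [show (mu + ((k+1:ℕ):ℝ)) = mu + (k:ℝ) + 1 from by push_cast; ring,
    show (mu + (k:ℝ)) - 1/2 = mu + (k:ℝ) - 1/2 from by ring]
  rw [hps]
  congr 1
  ring

lemma chain_all (mu : ℝ) (hmu : 1 < mu) (n m : ℕ) :
    ∀ k, k ≤ n →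
      (∫ t in (-1:ℝ)..1, pfun mu m k t *
          ((1 - t^2) ^ ((mu + (k:ℝ)) - 1/2 : ℝ) * gegenbauer (mu + (k:ℝ)) (n - k) t))
        = (∏ i ∈ Finset.range k, (((n:ℝ) - i) * ((n:ℝ) + i + 2*mu) / (2*(mu + i)))) *
          ∫ t in (-1:ℝ)..1, pfun mu m 0 t *
            ((1 - t^2) ^ ((mu + ((0:ℕ):ℝ)) - 1/2 : ℝ) * gegenbauer (mu + ((0:ℕ):ℝ)) (n - 0) t) := by
  intro k
  induction k with
  | zero => intro _; rw [Finset.range_zero, Finset.prod_empty, one_mul]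
  | succ k ih =>
    intro hk1
    rw [chain_step mu hmu n m k (by omega), ih (by omega), Finset.prod_range_succ]
    ring

lemma Jval_le (mu : ℝ) (hmu : 1 < mu) {m n : ℕ} (hmn : m ≤ n) :
    ∫ t in (-1:ℝ)..1, gegenbauer mu m t * gegenbauer mu n t * (1 - t^2) ^ (mu - 1/2 : ℝ)
      = if m = n then Real.pi * (2:ℝ)^(1 - 2*mu : ℝ) * Real.Gamma ((n:ℝ) + 2*mu) /
          ((n.factorial : ℝ) * ((n:ℝ) + mu) * Real.Gamma mu ^ 2) else 0 := by
  have hmu0 : (0:ℝ) < mu := by linarith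
  have hΓmu : Real.Gamma mu ≠ 0 := (Real.Gamma_pos_of_pos hmu0).ne'
  have hchain := chain_all mu hmu n m n le_rfl
  have hS0 : (∫ t in (-1:ℝ)..1, pfun mu m 0 t *
        ((1 - t^2) ^ ((mu + ((0:ℕ):ℝ)) - 1/2 : ℝ) * gegenbauer (mu + ((0:ℕ):ℝ)) (n - 0) t))
      = ∫ t in (-1:ℝ)..1, gegenbauer mu m t * gegenbauer mu n t * (1 - t^2) ^ (mu - 1/2 : ℝ) := by
    rw [pfun_zero mu hmu0 m, show (mu + ((0:ℕ):ℝ)) = mu from by push_cast; ring, Nat.sub_zero]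
    exact intervalIntegral.integral_congr fun t _ => by ring
  have hP : (∏ i ∈ Finset.range n, (((n:ℝ) - i) * ((n:ℝ) + i + 2*mu) / (2*(mu + i)))) ≠ 0 := by
    rw [Finset.prod_ne_zero_iff]
    intro i hi
    rw [Finset.mem_range] at hi
    have h1 : (0:ℝ) < (n:ℝ) - i := by
      have : (i:ℝ) < (n:ℝ) := by exact_mod_cast hi
      linarith
    have h2 : (0:ℝ) ≤ (i:ℝ) := Nat.cast_nonneg i
    positivity
  rw [hS0] at hchain
  rcases lt_or_eq_of_le hmn with hlt | heq
  · -- m < n : result 0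
    have hpn : pfun mu m n = fun _ : ℝ => (0:ℝ) := by
      funext t; exact if_neg (by omega)
    rw [hpn] at hchain
    simp only [zero_mul, intervalIntegral.integral_zero] at hchain
    rw [if_neg (by omega)]
    rcases mul_eq_zero.mp hchain.symm with h | h
    · exact absurd h hP
    · exact h
  · -- m = n
    subst heq
    rw [if_pos rfl]
    have hcm : (0:ℝ) ≤ (m:ℝ) := Nat.cast_nonneg m
    have hmun : (0:ℝ) < mu + (m:ℝ) := by linarith
    set S0cl := ∫ t in (-1:ℝ)..1,
      gegenbauer mu m t * gegenbauer mu m t * (1 - t^2) ^ (mu - 1/2 : ℝ) with hS0cl_def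
    have hSn : (∫ t in (-1:ℝ)..1, pfun mu m m t *
          ((1 - t^2) ^ ((mu + (m:ℝ)) - 1/2 : ℝ) * gegenbauer (mu + (m:ℝ)) (m - m) t))
        = ((2:ℝ)^m * (Real.Gamma (mu + m) / Real.Gamma mu)) *
          ∫ t in (-1:ℝ)..1, (1 - t^2) ^ ((mu + (m:ℝ)) - 1/2 : ℝ) := by
      rw [← intervalIntegral.integral_const_mul]
      refine intervalIntegral.integral_congr fun t _ => ?_
      have hp : pfun mu m m t
          = (2:ℝ)^m * (Real.Gamma (mu + m) / Real.Gamma mu) * gegenbauer (mu + m) (m - m) t :=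
        if_pos le_rfl
      rw [hp, Nat.sub_self, geg_zero _ hmun]
      ring
    rw [hSn] at hchain
    have hW : (∫ t in (-1:ℝ)..1, (1 - t^2) ^ ((mu + (m:ℝ)) - 1/2 : ℝ))
        = Real.sqrt Real.pi * Real.Gamma (mu + m + 1/2) / Real.Gamma (mu + m + 1) := by
      have := integral_weight (mu + (m:ℝ) - 1/2) (by linarith)
      rw [show (mu + (m:ℝ) - 1/2 + 1 : ℝ) = mu + m + 1/2 by ring,
        show (mu + (m:ℝ) - 1/2 + 3/2 : ℝ) = mu + m + 1 by ring] at this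
      rw [show ((mu + (m:ℝ)) - 1/2 : ℝ) = mu + (m:ℝ) - 1/2 by ring]
      exact this
    rw [hW] at hchain
    have hPval : (∏ i ∈ Finset.range m, (((m:ℝ) - i) * ((m:ℝ) + i + 2*mu) / (2*(mu + i))))
        = ((m.factorial : ℝ) * (Real.Gamma (((m:ℝ) + 2*mu) + m) / Real.Gamma ((m:ℝ) + 2*mu))) /
          ((2:ℝ)^(m:ℕ) * (Real.Gamma (mu + m) / Real.Gamma mu)) := by
      have h1 : (∏ i ∈ Finset.range m, (((m:ℝ) - i) * ((m:ℝ) + i + 2*mu) / (2*(mu + i))))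
          = ((∏ i ∈ Finset.range m, ((m:ℝ) - i)) * ∏ i ∈ Finset.range m, (((m:ℝ) + 2*mu) + i)) /
            ((∏ i ∈ Finset.range m, (2:ℝ)) * ∏ i ∈ Finset.range m, (mu + i)) := by
        rw [← Finset.prod_mul_distrib, ← Finset.prod_mul_distrib, ← Finset.prod_div_distrib]
        exact Finset.prod_congr rfl fun i _ => by ring
      rw [h1, prod_desc, prod_gamma ((m:ℝ) + 2*mu) (by linarith) m, prod_gamma mu hmu0 m,
        Finset.prod_const, Finset.card_range]
    rw [hPval] at hchain
    have hdarg : Real.Gamma (((m:ℝ) + 2*mu) + m) = Real.Gamma (2 * (mu + (m:ℝ))) := by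
      congr 1; ring
    rw [hdarg] at hchain
    -- algebra
    have hGn : (0:ℝ) < Real.Gamma (mu + m) := Real.Gamma_pos_of_pos hmun
    have hGh : (0:ℝ) < Real.Gamma (mu + m + 1/2) := Real.Gamma_pos_of_pos (by linarith)
    have hG1 : (0:ℝ) < Real.Gamma (mu + m + 1) := Real.Gamma_pos_of_pos (by linarith)
    have hT : (0:ℝ) < Real.Gamma ((m:ℝ) + 2*mu) := Real.Gamma_pos_of_pos (by linarith)
    have hD : (0:ℝ) < Real.Gamma (2 * (mu + (m:ℝ))) := Real.Gamma_pos_of_pos (by linarith)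
    have hF : ((m.factorial : ℕ) : ℝ) ≠ 0 := Nat.cast_ne_zero.mpr (Nat.factorial_ne_zero m)
    have hA : (0:ℝ) < (2:ℝ) ^ (1 - 2*(mu + (m:ℝ)) : ℝ) := Real.rpow_pos_of_pos two_pos _
    have hSq : (0:ℝ) < Real.sqrt Real.pi := Real.sqrt_pos.mpr Real.pi_pos
    have h2m : (0:ℝ) < (2:ℝ)^(m:ℕ) := by positivity
    have hdup := Real.Gamma_mul_Gamma_add_half (mu + (m:ℝ))
    have hDval : Real.Gamma (2 * (mu + (m:ℝ)))
        = Real.Gamma (mu + m) * Real.Gamma (mu + m + 1/2) /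
          ((2:ℝ) ^ (1 - 2*(mu + (m:ℝ)) : ℝ) * Real.sqrt Real.pi) := by
      rw [eq_div_iff (by positivity)]
      linear_combination -hdup
    rw [hDval] at hchain
    have hGmm : Real.Gamma (mu + (m:ℝ) + 1) = (mu + m) * Real.Gamma (mu + m) :=
      Real.Gamma_add_one hmun.ne'
    rw [hGmm] at hchain
    have hPne2 : ((m.factorial : ℝ) * (Real.Gamma (mu + ↑m) * Real.Gamma (mu + ↑m + 1/2) /
          ((2:ℝ) ^ (1 - 2*(mu + (m:ℝ)) : ℝ) * Real.sqrt Real.pi) / Real.Gamma ((m:ℝ) + 2*mu))) /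
          ((2:ℝ)^(m:ℕ) * (Real.Gamma (mu + m) / Real.Gamma mu)) ≠ 0 := by
      positivity
    have hS0val : S0cl
        = ((2:ℝ)^(m:ℕ) * (Real.Gamma (mu + m) / Real.Gamma mu)) *
            (Real.sqrt Real.pi * Real.Gamma (mu + m + 1/2) / ((mu + ↑m) * Real.Gamma (mu + ↑m))) /
          (((m.factorial : ℝ) * (Real.Gamma (mu + ↑m) * Real.Gamma (mu + ↑m + 1/2) /
            ((2:ℝ) ^ (1 - 2*(mu + (m:ℝ)) : ℝ) * Real.sqrt Real.pi) / Real.Gamma ((m:ℝ) + 2*mu))) /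
           ((2:ℝ)^(m:ℕ) * (Real.Gamma (mu + m) / Real.Gamma mu))) := by
      rw [eq_div_iff hPne2]
      linear_combination -hchain
    rw [hS0val]
    rw [show Real.pi = Real.sqrt Real.pi * Real.sqrt Real.pi from
      (Real.mul_self_sqrt Real.pi_pos.le).symm]
    have h2mr : ((2:ℝ)^(m:ℕ) : ℝ) = (2:ℝ)^((m:ℝ)) := (Real.rpow_natCast 2 m).symm
    have hpow : (2:ℝ)^(1 - 2*mu : ℝ)
        = (2:ℝ)^(1 - 2*(mu + (m:ℝ)) : ℝ) * (2:ℝ)^((m:ℝ)) * (2:ℝ)^((m:ℝ)) := by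
      rw [← Real.rpow_add two_pos, ← Real.rpow_add two_pos]
      congr 1; ring
    rw [h2mr, hpow]
    have hA2 : (0:ℝ) < (2:ℝ)^((m:ℝ)) := Real.rpow_pos_of_pos two_pos _
    field_simp
    rw [Real.sqrt_sq (Real.sqrt_nonneg _)]
    ring

lemma Jval (mu : ℝ) (hmu : 1 < mu) (m n : ℕ) :
    ∫ t in (-1:ℝ)..1, gegenbauer mu m t * gegenbauer mu n t * (1 - t^2) ^ (mu - 1/2 : ℝ)
      = if m = n then Real.pi * (2:ℝ)^(1 - 2*mu : ℝ) * Real.Gamma ((n:ℝ) + 2*mu) /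
          ((n.factorial : ℝ) * ((n:ℝ) + mu) * Real.Gamma mu ^ 2) else 0 := by
  rcases le_total m n with h | h
  · exact Jval_le mu hmu h
  · have hswap : (∫ t in (-1:ℝ)..1, gegenbauer mu m t * gegenbauer mu n t * (1 - t^2) ^ (mu - 1/2 : ℝ))
        = ∫ t in (-1:ℝ)..1, gegenbauer mu n t * gegenbauer mu m t * (1 - t^2) ^ (mu - 1/2 : ℝ) :=
      intervalIntegral.integral_congr fun t _ => by ring
    rw [hswap, Jval_le mu hmu h]
    by_cases hmn : m = n
    · subst hmn
      simp
    · rw [if_neg (fun hh => hmn hh.symm), if_neg hmn]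

lemma conn_small (lam : ℝ) (hlam : 0 < lam) {n : ℕ} (hn : n ≤ 1) (x : ℝ) :
    gegenbauer lam n x = lam / (n + lam) * gegenbauer (lam + 1) n x := by
  interval_cases n
  · rw [geg_zero lam hlam, geg_zero (lam+1) (by linarith)]
    push_cast
    field_simp
    ring
  · rw [geg_one lam hlam, geg_one (lam+1) (by linarith)]
    push_cast
    field_simp
    ring

end Geg

open Geg

theorem gegenbauer_mixed_order_integral (lam : ℝ) (hlam : 0 < lam) (l₁ l₂ : ℕ) :
    ∫ t in (-1 : ℝ)..1,
        gegenbauer lam l₁ t * gegenbauer (lam + 1) l₂ t * (1 - t ^ 2) ^ (lam + 1 / 2 : ℝ) =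
      (if l₁ = l₂ then
        Real.pi * lam * Real.Gamma ((l₁ : ℝ) + 2 * lam + 2) /
          ((2 : ℝ) ^ (2 * lam + 1 : ℝ) * (Nat.factorial l₁) * ((l₁ : ℝ) + lam) *
            ((l₁ : ℝ) + lam + 1) * Real.Gamma (lam + 1) ^ 2)
      else 0) -
      (if l₂ + 2 = l₁ then
        Real.pi * lam * Real.Gamma ((l₁ : ℝ) + 2 * lam) /
          ((2 : ℝ) ^ (2 * lam + 1 : ℝ) * (Nat.factorial (l₁ - 2)) * ((l₁ : ℝ) + lam - 1) *
            ((l₁ : ℝ) + lam) * Real.Gamma (lam + 1) ^ 2)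
      else 0) := by
  have hmu : (1:ℝ) < lam + 1 := by linarith
  have hcl : (0:ℝ) ≤ (l₁:ℝ) := Nat.cast_nonneg l₁
  have hl1lam : (0:ℝ) < (l₁:ℝ) + lam := by linarith
  have hJ : ∀ a b : ℕ, (∫ t in (-1:ℝ)..1,
        gegenbauer (lam+1) a t * gegenbauer (lam+1) b t * (1 - t^2) ^ (lam + 1/2 : ℝ))
      = if a = b then Real.pi * (2:ℝ)^(1 - 2*(lam+1) : ℝ) * Real.Gamma ((b:ℝ) + 2*(lam+1)) /
          ((b.factorial : ℝ) * ((b:ℝ) + (lam+1)) * Real.Gamma (lam+1) ^ 2) else 0 := by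
    intro a b
    have := Jval (lam+1) hmu a b
    rw [show ((lam+1) - 1/2 : ℝ) = lam + 1/2 by ring] at this
    exact this
  have h2p : (2:ℝ)^(1 - 2*(lam+1) : ℝ) = ((2:ℝ)^(2*lam+1 : ℝ))⁻¹ := by
    rw [show (1 - 2*(lam+1) : ℝ) = -(2*lam+1) by ring, Real.rpow_neg (by norm_num)]
  have hΓ1 : (0:ℝ) < Real.Gamma (lam + 1) := Real.Gamma_pos_of_pos (by linarith)
  have h2pow : (0:ℝ) < (2:ℝ)^(2*lam+1 : ℝ) := Real.rpow_pos_of_pos two_pos _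
  have hWcont : Continuous (fun t : ℝ => (1 - t^2) ^ (lam + 1/2 : ℝ)) :=
    weight_continuous _ (by linarith)
  have hintg : ∀ a b : ℕ, IntervalIntegrable
      (fun t => gegenbauer (lam+1) a t * gegenbauer (lam+1) b t * (1 - t^2) ^ (lam + 1/2 : ℝ))
      MeasureTheory.volume (-1:ℝ) 1 :=
    fun a b => (((geg_continuous _ _).mul (geg_continuous _ _)).mul hWcont).intervalIntegrable _ _
  by_cases hl2 : 2 ≤ l₁
  · -- main case
    have hstep1 : (∫ t in (-1:ℝ)..1,
          gegenbauer lam l₁ t * gegenbauer (lam + 1) l₂ t * (1 - t^2) ^ (lam + 1/2 : ℝ))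
        = (lam / ((l₁:ℝ) + lam)) *
          ((∫ t in (-1:ℝ)..1,
              gegenbauer (lam+1) l₁ t * gegenbauer (lam+1) l₂ t * (1 - t^2) ^ (lam + 1/2 : ℝ)) -
           ∫ t in (-1:ℝ)..1,
              gegenbauer (lam+1) (l₁-2) t * gegenbauer (lam+1) l₂ t * (1 - t^2) ^ (lam + 1/2 : ℝ)) := by
      rw [← intervalIntegral.integral_sub (hintg l₁ l₂) (hintg (l₁-2) l₂),
        ← intervalIntegral.integral_const_mul]
      refine intervalIntegral.integral_congr fun t _ => ?_
      rw [conn lam hlam hl2 t]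
      ring
    rw [hstep1, hJ l₁ l₂, hJ (l₁-2) l₂]
    have hc2 : (l₁ - 2 = l₂) ↔ (l₂ + 2 = l₁) := by omega
    by_cases h1 : l₁ = l₂
    · subst h1
      rw [if_pos rfl, if_pos rfl, if_neg (by omega), if_neg (by omega), sub_zero, sub_zero]
      rw [h2p]
      have hfl : ((l₁.factorial : ℕ) : ℝ) ≠ 0 := Nat.cast_ne_zero.mpr (Nat.factorial_ne_zero _)
      rw [show ((l₁:ℝ) + 2*(lam+1)) = (l₁:ℝ) + 2*lam + 2 by ring]
      field_simp
      ring
    · rw [if_neg h1, if_neg h1, zero_sub, mul_neg]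
      by_cases h2 : l₂ + 2 = l₁
      · rw [if_pos (hc2.mpr h2), if_pos h2, h2p, show l₁ - 2 = l₂ from by omega]
        have hc12 : ((l₂:ℕ) : ℝ) = (l₁:ℝ) - 2 := by
          have h3 : ((l₂ + 2 : ℕ):ℝ) = ((l₁:ℕ):ℝ) := by exact_mod_cast congrArg (Nat.cast : ℕ → ℝ) h2
          push_cast at h3
          linarith
        rw [hc12, show ((l₁:ℝ) - 2 + 2*(lam+1)) = (l₁:ℝ) + 2*lam by ring,
          show ((l₁:ℝ) - 2 + (lam+1)) = (l₁:ℝ) + lam - 1 by ring, zero_sub]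
        have hfl : ((l₂.factorial : ℕ) : ℝ) ≠ 0 := Nat.cast_ne_zero.mpr (Nat.factorial_ne_zero _)
        field_simp
      · rw [if_neg (fun hh => h2 (hc2.mp hh)), if_neg h2, mul_zero, neg_zero, sub_zero]
  · -- l₁ ≤ 1
    have hl1 : l₁ ≤ 1 := by omega
    have hstep1 : (∫ t in (-1:ℝ)..1,
          gegenbauer lam l₁ t * gegenbauer (lam + 1) l₂ t * (1 - t^2) ^ (lam + 1/2 : ℝ))
        = (lam / ((l₁:ℝ) + lam)) *
          ∫ t in (-1:ℝ)..1,
            gegenbauer (lam+1) l₁ t * gegenbauer (lam+1) l₂ t * (1 - t^2) ^ (lam + 1/2 : ℝ) := by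
      rw [← intervalIntegral.integral_const_mul]
      refine intervalIntegral.integral_congr fun t _ => ?_
      rw [conn_small lam hlam hl1 t]
      ring
    rw [hstep1, hJ l₁ l₂, if_neg (by omega : ¬ (l₂ + 2 = l₁)), sub_zero]
    by_cases h1 : l₁ = l₂
    · subst h1
      rw [if_pos rfl, if_pos rfl, h2p]
      have hfl : ((l₁.factorial : ℕ) : ℝ) ≠ 0 := Nat.cast_ne_zero.mpr (Nat.factorial_ne_zero _)
      rw [show ((l₁:ℝ) + 2*(lam+1)) = (l₁:ℝ) + 2*lam + 2 by ring]
      field_simp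
      ring
    · rw [if_neg h1, if_neg h1, mul_zero]
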